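/- The constant function f = 1 generates an extreme ray of the Erdahl cone: if g, h ∈ Erdahl(n) satisfy g + h = 1 (as functions), then g and h are both nonnegative constant functions. -/

import Mathlib

open scoped Matrix

/-- `f` is a polynomial function of degree at most 2 on `ℝⁿ`. -/
def IsDeg2 {n : ℕ} (f : (Fin n → ℝ) → ℝ) : Prop :=
  ∃ (c : ℝ) (b : Fin n → ℝ) (Q : Matrix (Fin n) (Fin n) ℝ),
    Q.IsSymm ∧ ∀ x, f x = c + 2 * (b ⬝ᵥ x) + x ⬝ᵥ (Q *ᵥ x)

/-- `x ∈ ℝⁿ` is an integral point, i.e. belongs to `ℤⁿ`. -/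
def IntPt {n : ℕ} (x : Fin n → ℝ) : Prop := ∀ i, ∃ m : ℤ, x i = m

/-- The Erdahl cone: degree at most 2 polynomial functions nonnegative on `ℤⁿ`. -/
def Erdahl (n : ℕ) : Set ((Fin n → ℝ) → ℝ) :=
  {f | IsDeg2 f ∧ ∀ x, IntPt x → 0 ≤ f x}


lemma aux_nonpos_lin {A q : ℝ} (h : ∀ m : ℕ, A * m ≤ q) : A ≤ 0 := by
  by_contra hA
  push_neg at hA
  obtain ⟨N, hN⟩ := exists_nat_gt (q / A)
  have h1 := h N
  have h2 : q < N * A := (div_lt_iff₀ hA).mp hN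
  linarith

lemma aux_nonpos_sq {A q : ℝ} (h : ∀ m : ℕ, A * (m:ℝ)^2 ≤ q) : A ≤ 0 := by
  by_contra hA
  push_neg at hA
  obtain ⟨N, hN⟩ := exists_nat_gt (q / A)
  have h1 := h (N+1)
  have h2 : q < N * A := (div_lt_iff₀ hA).mp hN
  have h3 : (0:ℝ) ≤ N := Nat.cast_nonneg N
  push_cast at h1
  nlinarith [mul_nonneg hA.le (by positivity : (0:ℝ) ≤ (N:ℝ)^2 + N + 1)]


lemma aux_quad_const {A B c : ℝ}
    (h : ∀ m : ℤ, 0 ≤ c + 2*B*(m:ℝ) + A*(m:ℝ)^2 ∧ c + 2*B*(m:ℝ) + A*(m:ℝ)^2 ≤ 1) :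
    A = 0 ∧ B = 0 := by
  have hA : A = 0 := by
    have key : ∀ m : ℕ, A * (m:ℝ)^2 ≤ 1 - c := by
      intro m
      have p := (h m).2
      have q := (h (-(m:ℤ))).2
      push_cast at p q
      nlinarith [p, q]
    have key2 : ∀ m : ℕ, (-A) * (m:ℝ)^2 ≤ c := by
      intro m
      have p := (h m).1
      have q := (h (-(m:ℤ))).1
      push_cast at p q
      nlinarith [p, q]
    have := aux_nonpos_sq key
    have := aux_nonpos_sq key2
    linarith
  subst hA
  refine ⟨rfl, ?_⟩
  have k1 : (2*B) ≤ 0 := aux_nonpos_lin (q := 1 - c) fun m => by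
    have p := (h m).2
    push_cast at p
    nlinarith [p]
  have k2 : (-(2*B)) ≤ 0 := aux_nonpos_lin (q := 1 - c) fun m => by
    have p := (h (-(m:ℤ))).2
    push_cast at p
    nlinarith [p]
  linarith

/-- The constant function `1` generates an extreme ray of the Erdahl cone. -/
theorem const_one_extreme_ray (n : ℕ) (g h : (Fin n → ℝ) → ℝ)
    (hg : g ∈ Erdahl n) (hh : h ∈ Erdahl n)
    (hsum : ∀ x, g x + h x = 1) :
    (∃ cg : ℝ, 0 ≤ cg ∧ ∀ x, g x = cg) ∧ (∃ ch : ℝ, 0 ≤ ch ∧ ∀ x, h x = ch) := by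
  obtain ⟨⟨c, b, Q, hQ, hgf⟩, hg0⟩ := hg
  obtain ⟨_, hh0⟩ := hh
  have hg1 : ∀ x, IntPt x → g x ≤ 1 := fun x hx => by
    have := hh0 x hx; have := hsum x; linarith
  -- scaling formula
  have hscale : ∀ (t : ℝ) (x : Fin n → ℝ),
      g (t • x) = c + 2 * (b ⬝ᵥ x) * t + (x ⬝ᵥ (Q *ᵥ x)) * t ^ 2 := by
    intro t x
    rw [hgf, Matrix.mulVec_smul, dotProduct_smul, smul_dotProduct,
      dotProduct_smul]
    simp [smul_eq_mul]; ring
  -- integer multiples of integer points are integer points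
  have hint : ∀ (m : ℤ) (x : Fin n → ℝ), IntPt x → IntPt ((m : ℝ) • x) := by
    intro m x hx i
    obtain ⟨k, hk⟩ := hx i
    refine ⟨m * k, ?_⟩
    simp only [Pi.smul_apply, smul_eq_mul, hk]
    push_cast
    ring
  -- the two coefficients vanish at every integer point
  have key : ∀ x, IntPt x → x ⬝ᵥ (Q *ᵥ x) = 0 ∧ b ⬝ᵥ x = 0 := by
    intro x hx
    have bound : ∀ m : ℤ,
        0 ≤ c + 2 * (b ⬝ᵥ x) * (m : ℝ) + (x ⬝ᵥ (Q *ᵥ x)) * (m : ℝ) ^ 2 ∧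
        c + 2 * (b ⬝ᵥ x) * (m : ℝ) + (x ⬝ᵥ (Q *ᵥ x)) * (m : ℝ) ^ 2 ≤ 1 := by
      intro m
      have h1 := hg0 _ (hint m x hx)
      have h2 := hg1 _ (hint m x hx)
      rw [hscale] at h1 h2
      exact ⟨h1, h2⟩
    obtain ⟨hA, hB⟩ := aux_quad_const bound
    exact ⟨hA, hB⟩
  have hIntSingle : ∀ i : Fin n, IntPt (Pi.single i (1 : ℝ)) := by
    intro i k
    by_cases hk : k = i
    · exact ⟨1, by subst hk; simp⟩
    · exact ⟨0, by simp [Pi.single_apply, hk]⟩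
  -- b = 0
  have hb : ∀ i, b i = 0 := by
    intro i
    have := (key _ (hIntSingle i)).2
    simpa using this
  -- diagonal of Q vanishes
  have hQd : ∀ i, Q i i = 0 := by
    intro i
    have := (key _ (hIntSingle i)).1
    simpa [Matrix.mulVec_single, single_dotProduct] using this
  -- off-diagonal of Q vanishes
  have hQ0 : ∀ i j, Q i j = 0 := by
    intro i j
    have hij : IntPt (Pi.single i (1 : ℝ) + Pi.single j 1) := by
      intro k
      obtain ⟨a, ha⟩ := hIntSingle i k
      obtain ⟨a', ha'⟩ := hIntSingle j k
      refine ⟨a + a', ?_⟩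
      simp only [Pi.add_apply, ha, ha']
      push_cast
      ring
    have hk := (key _ hij).1
    rw [add_dotProduct, Matrix.mulVec_add, dotProduct_add,
      dotProduct_add] at hk
    simp only [Matrix.mulVec_single, single_dotProduct, mul_one, op_smul_eq_smul, one_smul, one_mul, Matrix.col_apply] at hk
    have hsymm : Q j i = Q i j := by
      have := congrFun (congrFun hQ.eq i) j
      simpa [Matrix.transpose_apply] using this
    have hdi := hQd i
    have hdj := hQd j
    linarith [hk]
  -- hence g is constant equal to c
  have hgc : ∀ x, g x = c := by
    intro x
    rw [hgf]
    have e1 : b ⬝ᵥ x = 0 := by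
      simp [dotProduct, hb]
    have e2 : x ⬝ᵥ (Q *ᵥ x) = 0 := by
      simp [dotProduct, Matrix.mulVec, hQ0]
    rw [e1, e2]; ring
  have hz : IntPt (0 : Fin n → ℝ) := fun i => ⟨0, by simp⟩
  have hc0 : 0 ≤ c := by have := hg0 0 hz; rwa [hgc 0] at this
  have hc1 : c ≤ 1 := by have := hg1 0 hz; rwa [hgc 0] at this
  refine ⟨⟨c, hc0, hgc⟩, ⟨1 - c, by linarith, fun x => ?_⟩⟩
  have := hsum x
  rw [hgc x] at this
  linarith
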